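/- Classical bar induction for decidable bars: let ρ : List ℕ → ℕ and suppose (1) for every α : ℕ → ℕ there exists n with ρ (initial segment of α of length n) = 0; (2) A w holds whenever ρ w = 0; (3) for every finite sequence w, if A (w ++ [n]) holds for all n : ℕ, then A w holds. Then A [] holds. (Provable with classical logic and dependent choice.) -/
import Mathlib

/-- The initial segment `[α 0, ..., α (n-1)]` of `α` of length `n`. -/
def seg (α : ℕ → ℕ) (n : ℕ) : List ℕ := (List.range n).map α

lemma seg_succ (α : ℕ → ℕ) (n : ℕ) : seg α (n+1) = seg α n ++ [α n] := by
  simp [seg, List.range_succ]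

/-- Classical bar induction for decidable bars `ρ`. -/
theorem bar_induction (ρ : List ℕ → ℕ) (A : List ℕ → Prop)
    (hbar : ∀ α : ℕ → ℕ, ∃ n, ρ (seg α n) = 0)
    (hbase : ∀ w, ρ w = 0 → A w)
    (hind : ∀ w, (∀ n : ℕ, A (w ++ [n])) → A w) :
    A [] := by
  by_contra h
  have step : ∀ w, ¬ A w → ∃ n, ¬ A (w ++ [n]) := by
    intro w hw
    by_contra hc
    push_neg at hc
    exact hw (hind w hc)
  let F : ℕ → {w : List ℕ // ¬ A w} := fun n =>
    Nat.rec ⟨[], h⟩ (fun _ p => ⟨p.val ++ [Classical.choose (step p.val p.prop)],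
      Classical.choose_spec (step p.val p.prop)⟩) n
  let α : ℕ → ℕ := fun n => Classical.choose (step (F n).val (F n).prop)
  have hseg : ∀ n, seg α n = (F n).val := by
    intro n
    induction n with
    | zero => rfl
    | succ n ih => rw [seg_succ, ih]
  obtain ⟨n, hn⟩ := hbar α
  exact (F n).prop (hseg n ▸ hbase _ hn)
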